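/- Assume X X^T ∈ ℝ^{d×d} has full rank and suppose W_1 ∈ ℝ^{r×d}, W_2 ∈ ℝ^{d×r} are balanced (W_2^T W_2 = W_1 W_1^T), W_2 ≠ 0, and satisfy the equilibrium equations W_2^T W_2 W_1 X X^T = W_2^T X X^T and W_2 W_1 X X^T W_1^T = X X^T W_1^T. Then W_1 = W_2^T, all nonzero singular values of W_2 equal 1, and there exist k ∈ {1,...,r}, a matrix U ∈ ℝ^{d×k} whose columns are orthonormal eigenvectors of X X^T, and V ∈ ℝ^{r×k} with orthonormal columns, such that W_2 = U V^T; consequently W_2 W_1 = U U^T. -/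

import Mathlib

open Matrix

/-- Characterization of the nonzero balanced equilibria of the two-layer linear
autoencoder flow: W₁ = W₂ᵀ, all nonzero singular values of W₂ equal 1 (equivalently
W₂ W₂ᵀ W₂ = W₂), and W₂ = U Vᵀ where the columns of U are orthonormal eigenvectors of
X Xᵀ and V has orthonormal columns; consequently W₂ W₁ = U Uᵀ. -/
theorem stmt19 {dd r m : ℕ}
    (X : Matrix (Fin dd) (Fin m) ℝ) (hX : IsUnit (X * Xᵀ))
    (W1 : Matrix (Fin r) (Fin dd) ℝ) (W2 : Matrix (Fin dd) (Fin r) ℝ)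
    (hbal : W2ᵀ * W2 = W1 * W1ᵀ) (hW2 : W2 ≠ 0)
    (heq1 : W2ᵀ * W2 * W1 * (X * Xᵀ) = W2ᵀ * (X * Xᵀ))
    (heq2 : W2 * W1 * (X * Xᵀ) * W1ᵀ = (X * Xᵀ) * W1ᵀ) :
    W1 = W2ᵀ ∧ W2 * W2ᵀ * W2 = W2 ∧
    ∃ (k : ℕ), 1 ≤ k ∧ k ≤ r ∧
      ∃ (U : Matrix (Fin dd) (Fin k) ℝ) (V : Matrix (Fin r) (Fin k) ℝ) (lam : Fin k → ℝ),
        Uᵀ * U = 1 ∧ Vᵀ * V = 1 ∧ (X * Xᵀ) * U = U * Matrix.diagonal lam ∧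
        W2 = U * Vᵀ ∧ W2 * W1 = U * Uᵀ := by
  classical
  set S : Matrix (Fin dd) (Fin dd) ℝ := X * Xᵀ with hS
  have hSsym : Sᵀ = S := by rw [hS, transpose_mul, transpose_transpose]
  set Si : Matrix (Fin dd) (Fin dd) ℝ := ↑hX.unit⁻¹ with hSi
  have hSSi : S * Si = 1 := hX.mul_val_inv
  have hSiS : Si * S = 1 := hX.val_inv_mul
  -- cancel S on the right in heq1
  have e1 : W2ᵀ * W2 * W1 = W2ᵀ := by
    have h := congrArg (· * Si) heq1
    simpa only [Matrix.mul_assoc, hSSi, Matrix.mul_one] using h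
  have e2 : (W1 * W1ᵀ) * W1 = W2ᵀ := by rw [← hbal]; exact e1
  have e2' : W2 = W1ᵀ * (W1 * W1ᵀ) := by
    have h := congrArg Matrix.transpose e2
    simp only [transpose_mul, transpose_transpose] at h
    exact h.symm
  -- G = W1 W1ᵀ is PSD with G³ = G
  have hG3 : W1 * W1ᵀ * (W1 * W1ᵀ) * (W1 * W1ᵀ) = W1 * W1ᵀ := by
    have h : (W1 * W1ᵀ * W1) * (W1ᵀ * (W1 * W1ᵀ)) = W1 * W1ᵀ := by
      rw [e2, ← e2', hbal]
    simpa only [Matrix.mul_assoc] using h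
  have hGpsd : (W1 * W1ᵀ).PosSemidef := by
    have := Matrix.posSemidef_self_mul_conjTranspose W1
    rwa [conjTranspose_eq_transpose_of_trivial] at this
  have hGU : IsUnit (W1 * W1ᵀ + 1) :=
    (Matrix.PosDef.posSemidef_add hGpsd Matrix.PosDef.one).isUnit
  have hidem : W1 * W1ᵀ * (W1 * W1ᵀ) = W1 * W1ᵀ := by
    have h0 : (W1 * W1ᵀ * (W1 * W1ᵀ) - W1 * W1ᵀ) * (W1 * W1ᵀ + 1)
        = 0 * (W1 * W1ᵀ + 1) := by
      rw [Matrix.sub_mul, Matrix.mul_add, Matrix.mul_add, Matrix.mul_one, Matrix.mul_one,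
        hG3, Matrix.zero_mul]
      abel
    exact sub_eq_zero.mp (hGU.mul_right_cancel h0)
  -- W1 = W2ᵀ
  have hW1 : W1 = W2ᵀ := by
    have h2 : W2ᵀ * W1ᵀ = W1 * W1ᵀ := by
      rw [← e2]
      simpa only [Matrix.mul_assoc] using hidem
    have h3 : W1 * W2 = W1 * W1ᵀ := by
      rw [e2']
      simpa only [Matrix.mul_assoc] using hidem
    have hA : (W2ᵀ - W1) * (W2ᵀ - W1)ᵀ = 0 := by
      rw [transpose_sub, transpose_transpose, Matrix.sub_mul, Matrix.mul_sub, Matrix.mul_sub,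
        hbal, h2, h3]
      abel
    have hA' : (W2ᵀ - W1)ᵀᴴ * (W2ᵀ - W1)ᵀ = 0 := by
      rw [conjTranspose_eq_transpose_of_trivial, transpose_transpose]
      exact hA
    have h0 := Matrix.conjTranspose_mul_self_eq_zero.mp hA'
    have h0' := congrArg Matrix.transpose h0
    rw [transpose_transpose, transpose_zero] at h0'
    exact (sub_eq_zero.mp h0').symm
  subst hW1
  -- projection facts
  have hproj : W2 * W2ᵀ * W2 = W2 := by
    have h := congrArg Matrix.transpose e1
    simp only [transpose_mul, transpose_transpose] at h
    simpa only [Matrix.mul_assoc] using h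
  refine ⟨rfl, hproj, ?_⟩
  set Q : Matrix (Fin dd) (Fin dd) ℝ := W2 * W2ᵀ with hQ
  have hQsym : Qᵀ = Q := by rw [hQ, transpose_mul, transpose_transpose]
  have hQidem : Q * Q = Q := by
    have h := congrArg (· * W2ᵀ) hproj
    simpa only [hQ, Matrix.mul_assoc] using h
  -- heq2 now reads Q * S * W2ᵀᵀ = S * W2ᵀᵀ
  rw [transpose_transpose] at heq2
  have hQSW2 : Q * S * W2 = S * W2 := heq2
  have hQSQ : Q * S * Q = S * Q := by
    have h := congrArg (· * W2ᵀ) hQSW2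
    simpa only [hQ, Matrix.mul_assoc] using h
  have hcomm : Q * S = S * Q := by
    have h := congrArg Matrix.transpose hQSQ
    simp only [transpose_mul, hQsym, hSsym] at h
    rw [← Matrix.mul_assoc] at h
    calc Q * S = Q * S * Q := h.symm
    _ = S * Q := hQSQ
  set M : Matrix (Fin dd) (Fin dd) ℝ := S * Q with hM
  have hMherm : M.IsHermitian := by
    show Mᴴ = M
    rw [conjTranspose_eq_transpose_of_trivial, hM, transpose_mul, hQsym, hSsym, hcomm]
  set E : Matrix (Fin dd) (Fin dd) ℝ := (Matrix.IsHermitian.eigenvectorUnitary hMherm :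
    Matrix (Fin dd) (Fin dd) ℝ) with hE
  set μ : Fin dd → ℝ := hMherm.eigenvalues with hμ
  have hE1 : Eᵀ * E = 1 := by
    have h := (Matrix.mem_unitaryGroup_iff').mp (Matrix.IsHermitian.eigenvectorUnitary hMherm).2
    rwa [Matrix.star_eq_conjTranspose, conjTranspose_eq_transpose_of_trivial] at h
  have hE2 : E * Eᵀ = 1 := by
    have h := (Matrix.mem_unitaryGroup_iff).mp (Matrix.IsHermitian.eigenvectorUnitary hMherm).2
    rwa [Matrix.star_eq_conjTranspose, conjTranspose_eq_transpose_of_trivial] at h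
  have hspec : M = E * Matrix.diagonal μ * Eᵀ := by
    have h := hMherm.spectral_theorem
    simpa only [hE, hμ, Unitary.conjStarAlgAut_apply, Matrix.star_eq_conjTranspose, conjTranspose_eq_transpose_of_trivial,
      RCLike.ofReal_real_eq_id, Function.comp_id, Function.id_comp] using h
  have hME : M * E = E * Matrix.diagonal μ := by
    rw [hspec, Matrix.mul_assoc, Matrix.mul_assoc, hE1, Matrix.mul_one]
  have hQM : Q * M = M := by
    rw [hM, ← Matrix.mul_assoc, hQSQ]
  have hSQE : S * (Q * E) = E * Matrix.diagonal μ := by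
    rw [← Matrix.mul_assoc, ← hM, hME]
  have hQEexpr : Q * E = (Si * E) * Matrix.diagonal μ := by
    calc Q * E = (Si * S) * (Q * E) := by rw [hSiS, Matrix.one_mul]
    _ = Si * (S * (Q * E)) := by rw [Matrix.mul_assoc]
    _ = Si * (E * Matrix.diagonal μ) := by rw [hSQE]
    _ = (Si * E) * Matrix.diagonal μ := by rw [Matrix.mul_assoc]
  have hQEzero : ∀ i c, μ c = 0 → (Q * E) i c = 0 := by
    intro i c hc
    rw [hQEexpr, Matrix.mul_diagonal, hc, mul_zero]
  have hQED : ∀ i c, (Q * E) i c * μ c = E i c * μ c := by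
    intro i c
    have h1 : (Q * E) * Matrix.diagonal μ = E * Matrix.diagonal μ := by
      rw [Matrix.mul_assoc, ← hME, ← Matrix.mul_assoc, hQM, hME]
    have h2 := congrFun (congrFun h1 i) c
    rwa [Matrix.mul_diagonal, Matrix.mul_diagonal] at h2
  have hQE : ∀ i c, μ c ≠ 0 → (Q * E) i c = E i c := by
    intro i c hc
    exact mul_right_cancel₀ hc (hQED i c)
  -- the index set of nonzero eigenvalues
  set P := {c : Fin dd // μ c ≠ 0} with hP
  set k := Fintype.card P with hk
  set f : Fin k → Fin dd := fun j => ((Fintype.equivFin P).symm j : Fin dd) with hf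
  have hfinj : Function.Injective f := by
    intro a b hab
    have h := Subtype.ext hab
    simpa using (Fintype.equivFin P).symm.injective h
  have hfne : ∀ j, μ (f j) ≠ 0 := fun j => ((Fintype.equivFin P).symm j).2
  set U : Matrix (Fin dd) (Fin k) ℝ := Matrix.of (fun i j => E i (f j)) with hU
  set lam : Fin k → ℝ := fun j => μ (f j) with hlam
  set V : Matrix (Fin r) (Fin k) ℝ := W2ᵀ * U with hV
  -- orthonormality of the columns of U
  have hEorth : ∀ a b, (∑ i, E i a * E i b) = if a = b then (1:ℝ) else 0 := by
    intro a b
    have h := congrFun (congrFun hE1 a) b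
    rw [Matrix.mul_apply] at h
    simpa [Matrix.one_apply, Matrix.transpose_apply] using h
  have hUU : Uᵀ * U = 1 := by
    ext a b
    rw [Matrix.mul_apply]
    simp only [hU, Matrix.transpose_apply, Matrix.of_apply]
    rw [hEorth (f a) (f b)]
    simp [Matrix.one_apply, hfinj.eq_iff]
  -- Q = U Uᵀ
  have hQUU : Q = U * Uᵀ := by
    have hQform : Q = (Q * E) * Eᵀ := by rw [Matrix.mul_assoc, hE2, Matrix.mul_one]
    ext i j
    rw [hQform, Matrix.mul_apply]
    rw [Matrix.mul_apply]
    have key : ∀ c, (Q * E) i c * Eᵀ c j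
        = if μ c ≠ 0 then E i c * E j c else 0 := by
      intro c
      by_cases hc : μ c = 0
      · simp [hc, hQEzero i c hc]
      · simp [hc, hQE i c hc, Matrix.transpose_apply]
    calc (∑ c, (Q * E) i c * Eᵀ c j)
        = ∑ c, if μ c ≠ 0 then E i c * E j c else 0 :=
          Finset.sum_congr rfl (fun c _ => key c)
    _ = ∑ c ∈ Finset.univ.filter (fun c => μ c ≠ 0), E i c * E j c := by
          rw [Finset.sum_filter]
    _ = ∑ p : P, E i (p : Fin dd) * E j (p : Fin dd) := by
          exact Finset.sum_subtype (p := fun c => μ c ≠ 0)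
            (Finset.univ.filter (fun c => μ c ≠ 0))
            (fun x => by simp) (fun c => E i c * E j c)
    _ = ∑ b : Fin k, E i (f b) * E j (f b) := by
          simp only [hf]
          exact (Equiv.sum_comp (Fintype.equivFin P).symm
            (fun p : P => E i (p : Fin dd) * E j (p : Fin dd))).symm
    _ = ∑ b, U i b * Uᵀ b j := by
          simp [hU, Matrix.transpose_apply]
  -- Q U = U
  have hQU : Q * U = U := by
    rw [hQUU, Matrix.mul_assoc, hUU, Matrix.mul_one]
  -- S U = U diag lam
  have hSU : S * U = U * Matrix.diagonal lam := by
    ext i j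
    rw [Matrix.mul_apply, Matrix.mul_diagonal]
    have hcol : ∀ l, U l j = (Q * E) l (f j) := by
      intro l
      rw [hQE l (f j) (hfne j)]
      simp [hU]
    calc (∑ l, S i l * U l j) = ∑ l, S i l * (Q * E) l (f j) :=
          Finset.sum_congr rfl (fun l _ => by rw [hcol l])
    _ = (S * (Q * E)) i (f j) := (Matrix.mul_apply).symm
    _ = (E * Matrix.diagonal μ) i (f j) := by rw [hSQE]
    _ = E i (f j) * μ (f j) := by rw [Matrix.mul_diagonal]
    _ = U i j * lam j := by simp [hU, hlam]
  -- W2 = U Vᵀ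
  have hQW2 : Q * W2 = W2 := hproj
  have hW2UV : W2 = U * Vᵀ := by
    rw [hV, transpose_mul, transpose_transpose, ← Matrix.mul_assoc, ← hQUU, hQW2]
  have hVV : Vᵀ * V = 1 := by
    rw [hV, transpose_mul, transpose_transpose]
    calc Uᵀ * W2 * (W2ᵀ * U) = Uᵀ * (Q * U) := by
          simp only [hQ, Matrix.mul_assoc]
    _ = Uᵀ * U := by rw [hQU]
    _ = 1 := hUU
  have hW2W1 : W2 * W2ᵀ = U * Uᵀ := by rw [← hQ, hQUU]
  -- k bounds
  have hk1 : 1 ≤ k := by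
    rw [hk, Nat.succ_le_iff, Fintype.card_pos_iff]
    by_contra hne
    rw [not_nonempty_iff] at hne
    have hμ0 : μ = 0 := by
      funext c
      by_contra hc
      exact hne.false (⟨c, hc⟩ : P)
    have hM0 : M = 0 := by
      rw [hspec, hμ0,
        show Matrix.diagonal (0 : Fin dd → ℝ) = 0 from Matrix.diagonal_zero,
        Matrix.mul_zero, Matrix.zero_mul]
    have hQ0 : Q = 0 := by
      have h : Si * M = Q := by rw [hM, ← Matrix.mul_assoc, hSiS, Matrix.one_mul]
      rw [← h, hM0, Matrix.mul_zero]
    apply hW2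
    have hcc : W2ᵀᴴ * W2ᵀ = 0 := by
      rw [conjTranspose_eq_transpose_of_trivial, transpose_transpose, ← hQ, hQ0]
    have h1 := Matrix.conjTranspose_mul_self_eq_zero.mp hcc
    have h2 := congrArg Matrix.transpose h1
    rwa [transpose_transpose, transpose_zero] at h2
  have hkr : k ≤ r := by
    have h1 : ((1 : Matrix (Fin k) (Fin k) ℝ)).rank = k := by
      rw [Matrix.rank_one, Fintype.card_fin]
    have h2 : (Vᵀ * V).rank ≤ (Vᵀ).rank := Matrix.rank_mul_le_left _ _
    have h3 : (Vᵀ).rank ≤ r := by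
      have h := Matrix.rank_le_card_width (Vᵀ)
      simpa using h
    rw [hVV, h1] at h2
    exact le_trans h2 h3
  exact ⟨k, hk1, hkr, U, V, lam, hUU, hVV, hSU, hW2UV, hW2W1⟩
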